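/- Let n ≥ 4 be even and let EQ_n : {0,1}^n → {0,1} be defined by EQ_n(x) = 1 if and only if (x_1,…,x_{n/2}) = (x_{n/2+1},…,x_n). Then every label-stabilizing stateless protocol on the bidirectional n-ring that computes EQ_n has label complexity L_n = log₂|Σ| ≥ (n−2)/8. -/

import Mathlib

/-- A stateless protocol on the directed graph with node set `Fin n` and edge set
`E`, with label space `Λ`.  `react i` maps the current labeling (of which only
the values on `i`'s incoming edges may be used, per `react_local`) together with
`i`'s input bit to a new labeling (of which only the values on `i`'s outgoing
edges are ever read) together with an output bit. -/
structure StatelessProtocol (n : ℕ) (E : Finset (Fin n × Fin n)) (Λ : Type) where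
  react : Fin n → ({e // e ∈ E} → Λ) → Bool → ({e // e ∈ E} → Λ) × Bool
  react_local : ∀ (i : Fin n) (ℓ ℓ' : {e // e ∈ E} → Λ) (x : Bool),
      (∀ e : {e // e ∈ E}, e.1.2 = i → ℓ e = ℓ' e) → react i ℓ x = react i ℓ' x

namespace StatelessProtocol

variable {n : ℕ} {E : Finset (Fin n × Fin n)} {Λ : Type}

/-- `run P x σ ℓ0 t` is the labeling after `t` time steps of the run of `P` on
input `x` from initial labeling `ℓ0`, where `σ t` is the set of nodes activated
at time step `t + 1`. -/
def run (P : StatelessProtocol n E Λ) (x : Fin n → Bool) (σ : ℕ → Finset (Fin n))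
    (ℓ0 : {e // e ∈ E} → Λ) : ℕ → {e // e ∈ E} → Λ
  | 0 => ℓ0
  | t + 1 => fun e =>
      if e.1.1 ∈ σ t then (P.react e.1.1 (run P x σ ℓ0 t) (x e.1.1)).1 e
      else run P x σ ℓ0 t e

/-- A schedule is `r`-fair if every node is activated at least once in every
window of `r` consecutive time steps. -/
def Fair (σ : ℕ → Finset (Fin n)) (r : ℕ) : Prop :=
  ∀ (i : Fin n) (t : ℕ), ∃ s, t ≤ s ∧ s < t + r ∧ i ∈ σ s

/-- A labeling is stable for input `x` if every reaction function is at a fixed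
point: each node's prescribed outgoing labels coincide with the current ones. -/
def Stable (P : StatelessProtocol n E Λ) (x : Fin n → Bool)
    (ℓ : {e // e ∈ E} → Λ) : Prop :=
  ∀ e : {e // e ∈ E}, (P.react e.1.1 ℓ (x e.1.1)).1 e = ℓ e

/-- The labeling after `t` steps of the synchronous run (all nodes activated at
every step). -/
def syncRun (P : StatelessProtocol n E Λ) (x : Fin n → Bool)
    (ℓ0 : {e // e ∈ E} → Λ) : ℕ → {e // e ∈ E} → Λ :=
  P.run x (fun _ => Finset.univ) ℓ0

/-- The outputs at time step `t` of the synchronous run (the value at time `0`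
is a dummy value). -/
def syncOut (P : StatelessProtocol n E Λ) (x : Fin n → Bool)
    (ℓ0 : {e // e ∈ E} → Λ) : ℕ → Fin n → Bool
  | 0 => fun _ => false
  | t + 1 => fun i => (P.react i (P.syncRun x ℓ0 t) (x i)).2

/-- Output stabilization under the synchronous schedule. -/
def OutputStabilizing (P : StatelessProtocol n E Λ) : Prop :=
  ∀ x ℓ0, ∃ T, ∀ t, T ≤ t → P.syncOut x ℓ0 t = P.syncOut x ℓ0 T

/-- Label stabilization under the synchronous schedule. -/
def LabelStabilizing (P : StatelessProtocol n E Λ) : Prop :=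
  ∀ x ℓ0, ∃ T, ∀ t, T ≤ t → P.syncRun x ℓ0 t = P.syncRun x ℓ0 T

/-- `P` computes `f` if on every input and from every initial labeling, every
node's output sequence converges to `f x` under the synchronous schedule. -/
def Computes (P : StatelessProtocol n E Λ) (f : (Fin n → Bool) → Bool) : Prop :=
  ∀ x ℓ0, ∃ T, ∀ t, T ≤ t → ∀ i, P.syncOut x ℓ0 t i = f x

end StatelessProtocol

/-- The complete directed graph on `Fin n`. -/
def Kn (n : ℕ) : Finset (Fin n × Fin n) :=
  Finset.univ.filter (fun p => p.1 ≠ p.2)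

/-- The unidirectional `n`-ring: edges `(i, i + 1 mod n)`. -/
def uniRing (n : ℕ) : Finset (Fin n × Fin n) :=
  Finset.image (fun i : Fin n => (i, ⟨((i : ℕ) + 1) % n, Nat.mod_lt _ i.pos⟩)) Finset.univ

/-- The bidirectional `n`-ring: edges `(i, i ± 1 mod n)`. -/
def biRing (n : ℕ) : Finset (Fin n × Fin n) :=
  uniRing n ∪ (uniRing n).image (fun p => (p.2, p.1))

/-- The equality function: `1` iff the first half of the input equals the
second half. -/
def eqFun (n : ℕ) : (Fin n → Bool) → Bool := fun x =>
  decide (∀ i : Fin n, ∀ h : (i : ℕ) < n / 2, x i = x ⟨(i : ℕ) + n / 2, by omega⟩)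

section Aux

open StatelessProtocol

variable {n : ℕ} {E : Finset (Fin n × Fin n)} {Λ : Type}

lemma syncRun_stable (P : StatelessProtocol n E Λ) {x : Fin n → Bool}
    {ℓ : {e // e ∈ E} → Λ} (h : P.Stable x ℓ) : ∀ t, P.syncRun x ℓ t = ℓ := by
  intro t
  induction t with
  | zero => rfl
  | succ t ih =>
    funext e
    show P.run x (fun _ => Finset.univ) ℓ (t + 1) e = ℓ e
    rw [show P.run x (fun _ => Finset.univ) ℓ (t + 1) e
        = if e.1.1 ∈ (Finset.univ : Finset (Fin n)) then
            (P.react e.1.1 (P.run x (fun _ => Finset.univ) ℓ t) (x e.1.1)).1 e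
          else P.run x (fun _ => Finset.univ) ℓ t e from rfl]
    rw [if_pos (Finset.mem_univ _)]
    have : P.run x (fun _ => Finset.univ) ℓ t = ℓ := ih
    rw [this]
    exact h e

lemma stable_out (P : StatelessProtocol n E Λ) {f : (Fin n → Bool) → Bool}
    (hcomp : P.Computes f) {x : Fin n → Bool} {ℓ : {e // e ∈ E} → Λ}
    (h : P.Stable x ℓ) (i : Fin n) : (P.react i ℓ (x i)).2 = f x := by
  obtain ⟨T, hT⟩ := hcomp x ℓ
  have h1 := hT (T + 1) (by omega) i
  have h2 : P.syncOut x ℓ (T + 1) i = (P.react i (P.syncRun x ℓ T) (x i)).2 := rfl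
  rw [h2, syncRun_stable P h] at h1
  exact h1

lemma exists_stable (P : StatelessProtocol n E Λ) [Nonempty Λ]
    (hls : P.LabelStabilizing) (x : Fin n → Bool) : ∃ ℓ, P.Stable x ℓ := by
  obtain ⟨a⟩ := (inferInstance : Nonempty Λ)
  obtain ⟨T, hT⟩ := hls x (fun _ => a)
  refine ⟨P.syncRun x (fun _ => a) T, ?_⟩
  intro e
  have h1 := hT (T + 1) (by omega)
  have h2 : P.syncRun x (fun _ => a) (T + 1) e
      = if e.1.1 ∈ (Finset.univ : Finset (Fin n)) then
          (P.react e.1.1 (P.syncRun x (fun _ => a) T) (x e.1.1)).1 e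
        else P.syncRun x (fun _ => a) T e := rfl
  rw [if_pos (Finset.mem_univ _), h1] at h2
  exact h2.symm

lemma mem_biRing_iff {n : ℕ} {e : Fin n × Fin n} :
    e ∈ biRing n ↔ ((e.2 : ℕ) = ((e.1 : ℕ) + 1) % n ∨ (e.1 : ℕ) = ((e.2 : ℕ) + 1) % n) := by
  obtain ⟨e1, e2⟩ := e
  simp only [biRing, uniRing, Finset.mem_union, Finset.mem_image, Finset.mem_univ, true_and]
  constructor
  · rintro (⟨i, hi⟩ | ⟨p, ⟨i, hi⟩, hp⟩)
    · left
      obtain ⟨h1, h2⟩ := Prod.mk.injEq .. ▸ hi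
      subst h1
      rw [← h2]
    · right
      subst hi
      obtain ⟨h1, h2⟩ := Prod.mk.injEq .. ▸ hp
      subst h2
      rw [← h1]
  · rintro (h | h)
    · left
      exact ⟨e1, by rw [Prod.mk.injEq]; exact ⟨rfl, Fin.ext h.symm⟩⟩
    · right
      exact ⟨(e2, e1), ⟨e2, by rw [Prod.mk.injEq]; exact ⟨rfl, Fin.ext h.symm⟩⟩, rfl⟩

end Aux

set_option maxHeartbeats 1000000 in
open StatelessProtocol in
/-- Every label-stabilizing stateless protocol computing the
equality function on the bidirectional `n`-ring (`n ≥ 4` even) has label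
complexity `log₂|Σ| ≥ (n - 2) / 8`. -/
theorem eq_label_complexity_lower_bound (n : ℕ) (hn : 4 ≤ n) (heven : Even n)
    {Λ : Type} [Fintype Λ] [Nonempty Λ]
    (P : StatelessProtocol n (biRing n) Λ)
    (hls : P.LabelStabilizing) (hcomp : P.Computes (eqFun n)) :
    ((n : ℝ) - 2) / 8 ≤ Real.logb 2 (Fintype.card Λ) := by
  classical
  obtain ⟨k, hk⟩ := heven
  set m : ℕ := n / 2 with hm
  have hmk : m = k := by omega
  have hm2 : 2 ≤ m := by omega
  have hmn : m < n := by omega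
  have hmm : m + m = n := by omega
  -- choose stable labelings
  choose ℓS hℓS using exists_stable P hls
  -- doubled inputs
  set X : (Fin m → Bool) → (Fin n → Bool) :=
    fun b i => b ⟨(i : ℕ) % m, Nat.mod_lt _ (by omega)⟩ with hX
  have hX1 : ∀ b, eqFun n (X b) = true := by
    intro b
    simp only [eqFun, decide_eq_true_eq]
    intro i hi
    show b ⟨(i : ℕ) % m, _⟩ = b ⟨((i : ℕ) + n / 2) % m, _⟩
    congr 1
    exact Fin.ext (by show (i : ℕ) % m = ((i : ℕ) + m) % m; rw [Nat.add_mod_right])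
  -- the four crossing edges
  have hEA : ((⟨m - 1, by omega⟩ : Fin n), (⟨m, by omega⟩ : Fin n)) ∈ biRing n := by
    rw [mem_biRing_iff]; left; show m = (m - 1 + 1) % n; rw [Nat.sub_add_cancel (by omega)];
    exact (Nat.mod_eq_of_lt hmn).symm
  have hEB : ((⟨m, by omega⟩ : Fin n), (⟨m - 1, by omega⟩ : Fin n)) ∈ biRing n := by
    rw [mem_biRing_iff]; right; show m = (m - 1 + 1) % n; rw [Nat.sub_add_cancel (by omega)];
    exact (Nat.mod_eq_of_lt hmn).symm
  have hEC : ((⟨n - 1, by omega⟩ : Fin n), (⟨0, by omega⟩ : Fin n)) ∈ biRing n := by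
    rw [mem_biRing_iff]; left; show 0 = (n - 1 + 1) % n; rw [Nat.sub_add_cancel (by omega)];
    rw [Nat.mod_self]
  have hED : ((⟨0, by omega⟩ : Fin n), (⟨n - 1, by omega⟩ : Fin n)) ∈ biRing n := by
    rw [mem_biRing_iff]; right; show 0 = (n - 1 + 1) % n; rw [Nat.sub_add_cancel (by omega)];
    rw [Nat.mod_self]
  set Φ : (Fin m → Bool) → Λ × Λ × Λ × Λ := fun b =>
    (ℓS (X b) ⟨_, hEA⟩, ℓS (X b) ⟨_, hEB⟩, ℓS (X b) ⟨_, hEC⟩, ℓS (X b) ⟨_, hED⟩) with hΦdef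
  have hΦ : Function.Injective Φ := by
    intro b b' hbb
    simp only [hΦdef, Prod.mk.injEq] at hbb
    obtain ⟨hq1, hq2, hq3, hq4⟩ := hbb
    -- crossing edges agree
    have cross : ∀ e : {e // e ∈ biRing n}, ¬(((e.1.1 : ℕ) < m) ↔ ((e.1.2 : ℕ) < m)) →
        ℓS (X b) e = ℓS (X b') e := by
      intro e he
      have hmem := e.2
      rw [mem_biRing_iff] at hmem
      have h1 : (e.1.1 : ℕ) < n := e.1.1.isLt
      have h2 : (e.1.2 : ℕ) < n := e.1.2.isLt
      have modfact : ∀ a : ℕ, a < n → (a + 1) % n = if a + 1 = n then 0 else a + 1 := by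
        intro a ha
        split
        · next h => rw [h, Nat.mod_self]
        · next h => exact Nat.mod_eq_of_lt (by omega)
      rw [modfact _ h1, modfact _ h2] at hmem
      have hcases : ((e.1.1 : ℕ) = m - 1 ∧ (e.1.2 : ℕ) = m) ∨
          ((e.1.1 : ℕ) = m ∧ (e.1.2 : ℕ) = m - 1) ∨
          ((e.1.1 : ℕ) = n - 1 ∧ (e.1.2 : ℕ) = 0) ∨
          ((e.1.1 : ℕ) = 0 ∧ (e.1.2 : ℕ) = n - 1) := by
        rcases hmem with h | h <;> split at h <;> omega
      rcases hcases with ⟨ha, hb⟩ | ⟨ha, hb⟩ | ⟨ha, hb⟩ | ⟨ha, hb⟩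
      · rw [show e = ⟨_, hEA⟩ from Subtype.ext (Prod.ext (Fin.ext ha) (Fin.ext hb))]
        exact hq1
      · rw [show e = ⟨_, hEB⟩ from Subtype.ext (Prod.ext (Fin.ext ha) (Fin.ext hb))]
        exact hq2
      · rw [show e = ⟨_, hEC⟩ from Subtype.ext (Prod.ext (Fin.ext ha) (Fin.ext hb))]
        exact hq3
      · rw [show e = ⟨_, hED⟩ from Subtype.ext (Prod.ext (Fin.ext ha) (Fin.ext hb))]
        exact hq4
    -- spliced input and labeling
    set xx : Fin n → Bool := fun i => if (i : ℕ) < m then X b i else X b' i with hxx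
    set ℓ'' : {e // e ∈ biRing n} → Λ :=
      fun e => if ((e.1.1 : ℕ) < m ∧ (e.1.2 : ℕ) < m) then ℓS (X b) e else ℓS (X b') e
      with hℓ''
    have aggA : ∀ i : Fin n, (i : ℕ) < m → ∀ e : {e // e ∈ biRing n},
        e.1.1 = i ∨ e.1.2 = i → ℓ'' e = ℓS (X b) e := by
      intro i hi e he
      by_cases hc : ((e.1.1 : ℕ) < m ∧ (e.1.2 : ℕ) < m)
      · exact if_pos hc
      · rw [show ℓ'' e = ℓS (X b') e from if_neg hc]
        refine (cross e ?_).symm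
        rcases he with h | h
        · intro hiff; exact hc ⟨h ▸ hi, hiff.mp (h ▸ hi)⟩
        · intro hiff; exact hc ⟨hiff.mpr (h ▸ hi), h ▸ hi⟩
    have aggB : ∀ i : Fin n, ¬((i : ℕ) < m) → ∀ e : {e // e ∈ biRing n},
        e.1.1 = i ∨ e.1.2 = i → ℓ'' e = ℓS (X b') e := by
      intro i hi e he
      refine if_neg fun hc => hi ?_
      rcases he with h | h
      · exact h ▸ hc.1
      · exact h ▸ hc.2
    have hstable : P.Stable xx ℓ'' := by
      intro e
      by_cases hi : (e.1.1 : ℕ) < m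
      · have hxi : xx e.1.1 = X b e.1.1 := if_pos hi
        have hloc : P.react e.1.1 ℓ'' (xx e.1.1) = P.react e.1.1 (ℓS (X b)) (X b e.1.1) := by
          rw [hxi]
          exact P.react_local _ _ _ _ (fun e' he' => aggA e.1.1 hi e' (Or.inr he'))
        rw [hloc, hℓS (X b) e]
        exact (aggA e.1.1 hi e (Or.inl rfl)).symm
      · have hxi : xx e.1.1 = X b' e.1.1 := if_neg hi
        have hloc : P.react e.1.1 ℓ'' (xx e.1.1) = P.react e.1.1 (ℓS (X b')) (X b' e.1.1) := by
          rw [hxi]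
          exact P.react_local _ _ _ _ (fun e' he' => aggB e.1.1 hi e' (Or.inr he'))
        rw [hloc, hℓS (X b') e]
        exact (aggB e.1.1 hi e (Or.inl rfl)).symm
    -- output at node 0 forces eqFun xx = true
    have h0m : ((⟨0, by omega⟩ : Fin n) : ℕ) < m := by simpa using (by omega : 0 < m)
    have hout1 : (P.react ⟨0, by omega⟩ ℓ'' (xx ⟨0, by omega⟩)).2 = eqFun n xx :=
      stable_out P hcomp hstable _
    have hout2 : (P.react ⟨0, by omega⟩ ℓ'' (xx ⟨0, by omega⟩)).2 = eqFun n (X b) := by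
      have hxi : xx ⟨0, by omega⟩ = X b ⟨0, by omega⟩ := if_pos h0m
      have hloc : P.react (⟨0, by omega⟩ : Fin n) ℓ'' (xx ⟨0, by omega⟩)
          = P.react (⟨0, by omega⟩ : Fin n) (ℓS (X b)) (X b ⟨0, by omega⟩) := by
        rw [hxi]
        exact P.react_local _ _ _ _ (fun e' he' => aggA _ h0m e' (Or.inr he'))
      rw [hloc]
      exact stable_out P hcomp (hℓS (X b)) _
    have hxxeq : eqFun n xx = true := by rw [← hout1, hout2, hX1 b]
    -- extract b = b'
    simp only [eqFun, decide_eq_true_eq] at hxxeq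
    funext j
    have hj : (j : ℕ) < n := by omega
    have := hxxeq ⟨(j : ℕ), hj⟩ (by show (j : ℕ) < n / 2; exact j.isLt)
    have hl : xx ⟨(j : ℕ), hj⟩ = b j := by
      rw [show xx ⟨(j : ℕ), hj⟩ = X b ⟨(j : ℕ), hj⟩ from if_pos (by simpa using j.isLt)]
      show b ⟨(j : ℕ) % m, _⟩ = b j
      congr 1
      exact Fin.ext (Nat.mod_eq_of_lt j.isLt)
    have hr : xx ⟨(j : ℕ) + n / 2, by omega⟩ = b' j := by
      rw [show xx ⟨(j : ℕ) + n / 2, by omega⟩ = X b' ⟨(j : ℕ) + n / 2, by omega⟩ from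
        if_neg (by simp; omega)]
      show b' ⟨((j : ℕ) + n / 2) % m, _⟩ = b' j
      congr 1
      refine Fin.ext ?_
      show ((j : ℕ) + m) % m = (j : ℕ)
      rw [Nat.add_mod_right]
      exact Nat.mod_eq_of_lt j.isLt
    rw [hl, hr] at this
    exact this
  -- cardinality count
  have hcard : Fintype.card (Fin m → Bool) ≤ Fintype.card (Λ × Λ × Λ × Λ) :=
    Fintype.card_le_of_injective Φ hΦ
  rw [Fintype.card_fun, Fintype.card_bool, Fintype.card_fin] at hcard
  simp only [Fintype.card_prod] at hcard
  set c : ℕ := Fintype.card Λ with hc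
  have hcard4 : 2 ^ m ≤ c ^ 4 := by
    calc 2 ^ m ≤ c * (c * (c * c)) := hcard
    _ = c ^ 4 := by ring
  have hc2 : 2 ≤ c := by
    by_contra h
    push_neg at h
    have h1 : c ^ 4 ≤ 1 ^ 4 := Nat.pow_le_pow_left (by omega) 4
    have h2 : (2 : ℕ) ^ 1 ≤ 2 ^ m := Nat.pow_le_pow_right (by omega) (by omega)
    simp only [one_pow, pow_one] at h1 h2
    omega
  -- pass to reals
  have hr4 : (2 : ℝ) ^ m ≤ (c : ℝ) ^ 4 := by exact_mod_cast hcard4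
  have hlog : (m : ℝ) ≤ 4 * Real.logb 2 c := by
    have h1 : Real.logb 2 ((2 : ℝ) ^ m) ≤ Real.logb 2 ((c : ℝ) ^ 4) :=
      Real.logb_le_logb_of_le (by norm_num) (by positivity) hr4
    rw [Real.logb_pow, Real.logb_pow, Real.logb_self_eq_one (by norm_num)] at h1
    simpa using h1
  have hn2 : (n : ℝ) = 2 * m := by exact_mod_cast (by omega : n = 2 * m)
  rw [hn2]
  linarith
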